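/- If S is a (unital) subring of a ring R and R is a CSNC ring, then S is a CSNC ring. -/

import Mathlib

/-- An element `a` of a ring is *clean* if `a = e + u` for some idempotent `e` and unit `u`. -/
def IsCleanElem {R : Type*} [Ring R] (a : R) : Prop :=
  ∃ e u : R, IsIdempotentElem e ∧ IsUnit u ∧ a = e + u

/-- An element `a` of a ring is *strongly nil-clean* if `a = e + q` for some idempotent `e`
and nilpotent `q` with `e * q = q * e`. -/
def IsStronglyNilCleanElem {R : Type*} [Ring R] (a : R) : Prop :=
  ∃ e q : R, IsIdempotentElem e ∧ IsNilpotent q ∧ e * q = q * e ∧ a = e + q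

/-- A ring is a *CSNC ring* if every clean element is strongly nil-clean. -/
def IsCSNCRing (R : Type*) [Ring R] : Prop :=
  ∀ a : R, IsCleanElem a → IsStronglyNilCleanElem a

open Polynomial in
/-- Polynomial divisibility: `X - X ^ 2` divides `X - (1 - (1 - X ^ (k+1)) ^ (k+1))` in `ℤ[X]`. -/
lemma aux_dvd (k : ℕ) :
    (X - X ^ 2 : ℤ[X]) ∣ X - (1 - (1 - X ^ (k + 1)) ^ (k + 1)) := by
  obtain ⟨s, hs⟩ : ((1 : ℤ[X]) - X) ∣ 1 - X ^ (k + 1) := by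
    simpa using sub_dvd_pow_sub_pow (1 : ℤ[X]) X (k + 1)
  have h0 : ((1 : ℤ[X]) - X ^ (k + 1)) ^ (k + 1)
      = (1 - X) * ((1 - X) ^ k * s ^ (k + 1)) := by
    rw [hs, mul_pow, pow_succ]; ring
  have heval : (((1 : ℤ[X]) - X) ^ k * s ^ (k + 1)).eval 0 = 1 := by
    have := congrArg (Polynomial.eval 0) h0
    simpa using this.symm
  have hX : (X : ℤ[X]) ∣ (1 - X) ^ k * s ^ (k + 1) - 1 := by
    rw [Polynomial.X_dvd_iff, Polynomial.coeff_zero_eq_eval_zero]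
    simp [heval]
  obtain ⟨m, hm⟩ := hX
  refine ⟨m, ?_⟩
  rw [hs, mul_pow]
  linear_combination (1 - (X : ℤ[X])) * hm

/-- If `(x - x ^ 2) ^ n = 0` then `x - (1 - (1 - x ^ n) ^ n)` is nilpotent. -/
lemma aux_nil {A : Type*} [Ring A] (x : A) (n : ℕ) (hn : (x - x ^ 2) ^ n = 0) :
    IsNilpotent (x - (1 - (1 - x ^ n) ^ n)) := by
  cases n with
  | zero =>
      rw [pow_zero] at hn
      have : Subsingleton A := subsingleton_of_zero_eq_one hn.symm
      exact ⟨1, Subsingleton.elim _ _⟩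
  | succ k =>
      obtain ⟨C, hC⟩ := aux_dvd k
      have := congrArg (Polynomial.aeval (R := ℤ) x) hC
      simp only [map_sub, map_one, map_mul, map_pow, Polynomial.aeval_X] at this
      refine ⟨k + 1, ?_⟩
      rw [this]
      have hcomm : Commute (x - x ^ 2) (Polynomial.aeval (R := ℤ) x C) := by
        have h1 : x - x ^ 2 = Polynomial.aeval (R := ℤ) x (Polynomial.X - Polynomial.X ^ 2) := by simp
        rw [Commute, SemiconjBy, h1, ← map_mul, ← map_mul, mul_comm]
      rw [hcomm.mul_pow, hn, zero_mul]

theorem stmt_4 (R : Type*) [Ring R] (S : Subring R) (h : IsCSNCRing R) :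
    IsCSNCRing S := by
  intro a ha
  -- `a` is clean in `R`
  obtain ⟨e, u, he, hu, hau⟩ := ha
  have haR : IsCleanElem (a : R) := by
    refine ⟨e, u, ?_, hu.map S.subtype, ?_⟩
    · have := congrArg (Subtype.val) he
      simpa [IsIdempotentElem] using this
    · have := congrArg (Subtype.val) hau
      simpa using this
  -- `a` is strongly nil-clean in `R`, hence `a - a ^ 2` is nilpotent in `R`
  obtain ⟨f, q, hf, hq, hcm, hafq⟩ := h _ haR
  have hcqf : Commute q f := Commute.symm hcm
  have hkey : (a : R) - (a : R) ^ 2 = q * (1 - f - f - q) := by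
    rw [hafq]
    have : ((f : R) + q) ^ 2 = f * f + f * q + (q * f + q * q) := by
      rw [pow_two, add_mul, mul_add, mul_add]
    rw [this, hf.eq, hcm]
    noncomm_ring
  have hnilR : IsNilpotent ((a : R) - (a : R) ^ 2) := by
    rw [hkey]
    have hc : Commute q (1 - f - f - q) :=
      (((Commute.one_right q).sub_right hcqf).sub_right hcqf).sub_right (Commute.refl q)
    exact hc.isNilpotent_mul_right hq
  -- transfer nilpotency to `S`
  obtain ⟨n, hn⟩ := hnilR
  have hnS : (a - a ^ 2 : S) ^ n = 0 := by
    have : (((a - a ^ 2 : S) : R)) ^ n = 0 := by push_cast; exact hn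
    exact_mod_cast this
  -- strongly nil-clean decomposition in `S`
  refine ⟨1 - (1 - a ^ n) ^ n, a - (1 - (1 - a ^ n) ^ n), ?_, aux_nil a n hnS, ?_, by abel⟩
  · exact isIdempotentElem_one_sub_one_sub_pow_pow a n hnS
  · have hc : Commute a (1 - (1 - a ^ n) ^ n) :=
      (Commute.one_right a).sub_right
        (((Commute.one_right a).sub_right ((Commute.refl a).pow_right n)).pow_right n)
    exact ((hc.symm.sub_right (Commute.refl _)).eq)
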